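/- Every codeword c ∈ C of the block code, viewed as the constant polynomial vector c(D) = c ∈ F[D]^n, belongs to the dual convolutional code V^⊥. Consequently, if C is nonzero, the free distance of V^⊥ (the least weight of a nonzero element of V^⊥) is at most d, the minimum Hamming distance of C. -/

import Mathlib

/-- The minimum Hamming distance of a (linear) code `C ⊆ Fⁿ`: the least
Hamming weight of a nonzero codeword. -/
noncomputable def minHammingDist {n : ℕ} {F : Type*} [Zero F] [DecidableEq F]
    (C : Set (Fin n → F)) : ℕ :=
  sInf {w : ℕ | ∃ v ∈ C, v ≠ 0 ∧ hammingNorm v = w}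

/-- The weight of a vector of polynomials `c(D) ∈ F[D]ⁿ`: the sum over all `t`
of the Hamming weights of the coefficient vectors `cₜ ∈ Fⁿ`. -/
noncomputable def polyVecWeight {n : ℕ} {F : Type*} [Semiring F] [DecidableEq F]
    (c : Fin n → Polynomial F) : ℕ :=
  ∑ᶠ t : ℕ, hammingNorm (fun j => (c j).coeff t)

lemma coeff0_vecMul {F : Type*} [Field F] {n κ m : ℕ}
    (H : Fin (m + 1) → Matrix (Fin κ) (Fin n) F)
    (G : Matrix (Fin κ) (Fin n) (Polynomial F))
    (hG : G = ∑ i : Fin (m + 1), (H i).map (fun a => Polynomial.C a * Polynomial.X ^ (i : ℕ)))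
    (u : Fin κ → Polynomial F) (j : Fin n) :
    ((Matrix.vecMul u G) j).coeff 0 = ∑ k, (u k).coeff 0 * H 0 k j := by
  have hGc : ∀ k, (G k j).coeff 0 = H 0 k j := by
    intro k
    subst hG
    simp only [Matrix.sum_apply, Matrix.map_apply, Polynomial.finset_sum_coeff,
      Polynomial.coeff_C_mul, Polynomial.coeff_X_pow]
    rw [Finset.sum_eq_single 0]
    · simp
    · intro i _ hi
      have h2 : (i : ℕ) ≠ 0 := by
        exact fun h => hi (Fin.ext (by simp [h]))
      rw [if_neg (fun h => h2 h.symm), mul_zero]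
    · simp
  simp only [Matrix.vecMul, dotProduct, Polynomial.finset_sum_coeff,
    Polynomial.mul_coeff_zero]
  exact Finset.sum_congr rfl fun k _ => by rw [hGc]

theorem dual_convolutional_code_free_distance_upper_bound
    {F : Type*} [Field F] [Fintype F] [DecidableEq F] {n κ m : ℕ}
    (hn : 0 < n) (hκ : 0 < κ)
    (H : Fin (m + 1) → Matrix (Fin κ) (Fin n) F)
    (hind : LinearIndependent F
      (fun p : {p : Fin (m + 1) × Fin κ // H p.1 p.2 ≠ 0} => H p.1.1 p.1.2))
    (h0 : ∀ j : Fin κ, H 0 j ≠ 0)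
    (G : Matrix (Fin κ) (Fin n) (Polynomial F))
    (hG : G = ∑ i : Fin (m + 1), (H i).map (fun a => Polynomial.C a * Polynomial.X ^ (i : ℕ)))
    (Vperp : Set (Fin n → Polynomial F))
    (hVperp : Vperp = {c : Fin n → Polynomial F | ∀ u : Fin κ → Polynomial F,
      ∑ᶠ t : ℕ, ∑ j : Fin n, (c j).coeff t * ((Matrix.vecMul u G) j).coeff t = 0}) :
    (∀ c : Fin n → F, (∀ i, (H i).mulVec c = 0) →
        (fun j => Polynomial.C (c j)) ∈ Vperp) ∧
    ((∃ c : Fin n → F, (∀ i, (H i).mulVec c = 0) ∧ c ≠ 0) →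
      sInf {w : ℕ | ∃ cD ∈ Vperp, cD ≠ 0 ∧ polyVecWeight cD = w} ≤
        minHammingDist {v : Fin n → F | ∀ i, (H i).mulVec v = 0}) := by
  have hmem : ∀ c : Fin n → F, (∀ i, (H i).mulVec c = 0) →
      (fun j => Polynomial.C (c j)) ∈ Vperp := by
    intro c hc
    rw [hVperp]
    intro u
    rw [finsum_eq_single _ 0]
    · simp only [Polynomial.coeff_C_zero]
      calc ∑ j, c j * ((Matrix.vecMul u G) j).coeff 0
          = ∑ j, ∑ k, c j * ((u k).coeff 0 * H 0 k j) := by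
            refine Finset.sum_congr rfl fun j _ => ?_
            rw [coeff0_vecMul H G hG, Finset.mul_sum]
        _ = ∑ k, (u k).coeff 0 * ∑ j, H 0 k j * c j := by
            rw [Finset.sum_comm]
            refine Finset.sum_congr rfl fun k _ => ?_
            rw [Finset.mul_sum]
            exact Finset.sum_congr rfl fun j _ => by ring
        _ = 0 := by
            refine Finset.sum_eq_zero fun k _ => ?_
            have hk := congrFun (hc 0) k
            simp only [Matrix.mulVec, dotProduct, Pi.zero_apply] at hk
            rw [hk, mul_zero]
    · intro t ht
      apply Finset.sum_eq_zero
      intro j _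
      simp [Polynomial.coeff_C, ht]
  refine ⟨hmem, ?_⟩
  rintro ⟨c, hc, hc0⟩
  unfold minHammingDist
  have hS2ne : {w : ℕ | ∃ v ∈ {v : Fin n → F | ∀ i, (H i).mulVec v = 0}, v ≠ 0 ∧ hammingNorm v = w}.Nonempty :=
    ⟨hammingNorm c, c, hc, hc0, rfl⟩
  obtain ⟨v, hv, hv0, hvw⟩ := Nat.sInf_mem hS2ne
  rw [← hvw]
  apply Nat.sInf_le
  refine ⟨fun j => Polynomial.C (v j), hmem v hv, ?_, ?_⟩
  · intro h
    apply hv0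
    funext j
    have := congrFun h j
    simpa using this
  · unfold polyVecWeight
    rw [finsum_eq_single _ 0]
    · simp
    · intro t ht
      have : (fun j => (Polynomial.C (v j)).coeff t) = (0 : Fin n → F) := by
        funext j; simp [Polynomial.coeff_C, ht]
      rw [this]
      simp
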